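/- With X(s,t) as above and δ, ξ as defined, the cross product ∂ₛX × ∂ₜX at (s,t) is parallel to the vector (-y(s,t), x(s,t), 1) if and only if [(s + ξ(t))² + δ(t)²] θ'(t) + (2s + ξ(t)) δ'(t) + γ'(t) - δ(t) ξ'(t) = 0. -/

import Mathlib

set_option linter.unnecessarySimpa false

open Real

/-- Cross product on ℝ × ℝ × ℝ. -/
def cross3 (u v : ℝ × ℝ × ℝ) : ℝ × ℝ × ℝ :=
  (u.2.1 * v.2.2 - u.2.2 * v.2.1, u.2.2 * v.1 - u.1 * v.2.2, u.1 * v.2.1 - u.2.1 * v.1)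

/-- Theorem A (b): ∂ₛX × ∂ₜX is parallel to (-y, x, 1) at (s,t) iff the
singularity equation (2.9) holds. -/
theorem singular_point_iff (α β γ θ : ℝ → ℝ)
    (hα : ContDiff ℝ 2 α) (hβ : ContDiff ℝ 2 β) (hγ : ContDiff ℝ 2 γ) (hθ : ContDiff ℝ 2 θ)
    (X : ℝ → ℝ → ℝ × ℝ × ℝ)
    (hX : ∀ s t, X s t =
      (s * Real.sin (θ t) + α t, -s * Real.cos (θ t) + β t,
        s * (β t * Real.sin (θ t) + α t * Real.cos (θ t)) + γ t))
    (δ ξ : ℝ → ℝ)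
    (hδ : ∀ t, δ t = α t * Real.cos (θ t) + β t * Real.sin (θ t))
    (hξ : ∀ t, ξ t = α t * Real.sin (θ t) - β t * Real.cos (θ t))
    (s t : ℝ) :
    (∃ c : ℝ,
      cross3
        (deriv (fun s' => (X s' t).1) s, deriv (fun s' => (X s' t).2.1) s,
          deriv (fun s' => (X s' t).2.2) s)
        (deriv (fun t' => (X s t').1) t, deriv (fun t' => (X s t').2.1) t,
          deriv (fun t' => (X s t').2.2) t)
        = c • (-(X s t).2.1, (X s t).1, (1 : ℝ)))
    ↔ ((s + ξ t) ^ 2 + (δ t) ^ 2) * deriv θ t + (2 * s + ξ t) * deriv δ t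
        + deriv γ t - δ t * deriv ξ t = 0 := by

  have hαd : HasDerivAt α (deriv α t) t :=
    ((hα.differentiable (by norm_num)).differentiableAt).hasDerivAt
  have hβd : HasDerivAt β (deriv β t) t :=
    ((hβ.differentiable (by norm_num)).differentiableAt).hasDerivAt
  have hγd : HasDerivAt γ (deriv γ t) t :=
    ((hγ.differentiable (by norm_num)).differentiableAt).hasDerivAt
  have hθd : HasDerivAt θ (deriv θ t) t :=
    ((hθ.differentiable (by norm_num)).differentiableAt).hasDerivAt
  have hsin : HasDerivAt (fun t' => Real.sin (θ t')) (Real.cos (θ t) * deriv θ t) t :=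
    (Real.hasDerivAt_sin (θ t)).comp t hθd
  have hcos : HasDerivAt (fun t' => Real.cos (θ t')) (-Real.sin (θ t) * deriv θ t) t :=
    (Real.hasDerivAt_cos (θ t)).comp t hθd
  -- abbreviations
  set a := α t with ha
  set b := β t with hb
  set c := Real.cos (θ t) with hc
  set sn := Real.sin (θ t) with hsn
  set da := deriv α t with hda
  set db := deriv β t with hdb
  set dg := deriv γ t with hdg
  set dth := deriv θ t with hdth
  -- s-derivatives
  have hu1 : deriv (fun s' => (X s' t).1) s = sn := by
    have : (fun s' => (X s' t).1) = fun s' => s' * sn + a := by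
      funext s'; rw [hX]
    rw [this]
    simpa using (((hasDerivAt_id s).mul_const sn).add_const a).deriv
  have hu2 : deriv (fun s' => (X s' t).2.1) s = -c := by
    have : (fun s' => (X s' t).2.1) = fun s' => -s' * c + b := by
      funext s'; rw [hX]
    rw [this]
    have h : HasDerivAt (fun s' : ℝ => -s' * c + b) (-c) s := by
      simpa using (((hasDerivAt_id s).neg.mul_const c).add_const b)
    exact h.deriv
  have hu3 : deriv (fun s' => (X s' t).2.2) s = b * sn + a * c := by
    have : (fun s' => (X s' t).2.2) = fun s' => s' * (b * sn + a * c) + γ t := by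
      funext s'; rw [hX]
    rw [this]
    simpa using (((hasDerivAt_id s).mul_const (b * sn + a * c)).add_const (γ t)).deriv
  -- t-derivatives
  have hv1 : deriv (fun t' => (X s t').1) t = s * (c * dth) + da := by
    have heq : (fun t' => (X s t').1) = fun t' => s * Real.sin (θ t') + α t' := by
      funext t'; rw [hX]
    rw [heq]
    exact ((hsin.const_mul s).add hαd).deriv
  have hv2 : deriv (fun t' => (X s t').2.1) t = -s * (-sn * dth) + db := by
    have heq : (fun t' => (X s t').2.1) = fun t' => -s * Real.cos (θ t') + β t' := by
      funext t'; rw [hX]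
    rw [heq]
    exact ((hcos.const_mul (-s)).add hβd).deriv
  have hv3 : deriv (fun t' => (X s t').2.2) t
      = s * ((db * sn + b * (c * dth)) + (da * c + a * (-sn * dth))) + dg := by
    have heq : (fun t' => (X s t').2.2)
        = fun t' => s * (β t' * Real.sin (θ t') + α t' * Real.cos (θ t')) + γ t' := by
      funext t'; rw [hX]
    rw [heq]
    exact ((((hβd.mul hsin).add (hαd.mul hcos)).const_mul s).add hγd).deriv
  -- derivatives of δ and ξ
  have hdδ : deriv δ t = (da * c + a * (-sn * dth)) + (db * sn + b * (c * dth)) := by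
    have heq : δ = fun t' => α t' * Real.cos (θ t') + β t' * Real.sin (θ t') := by
      funext t'; rw [hδ]
    rw [heq]
    exact ((hαd.mul hcos).add (hβd.mul hsin)).deriv
  have hdξ : deriv ξ t = (da * sn + a * (c * dth)) - (db * c + b * (-sn * dth)) := by
    have heq : ξ = fun t' => α t' * Real.sin (θ t') - β t' * Real.cos (θ t') := by
      funext t'; rw [hξ]
    rw [heq]
    exact ((hαd.mul hsin).sub (hβd.mul hcos)).deriv
  have pyth : sn ^ 2 + c ^ 2 = 1 := Real.sin_sq_add_cos_sq (θ t)
  rw [hu1, hu2, hu3, hv1, hv2, hv3, hdδ, hdξ, hδ t, hξ t, hX s t]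
  simp only [cross3, Prod.smul_mk, smul_eq_mul, Prod.mk.injEq, mul_one]
  constructor
  · rintro ⟨k, h1, h2, h3⟩
    linear_combination (-c) * h1 + (-sn) * h2
      + (c * (s * c - b) + sn * (s * sn + a)) * h3
      + (-(dg + 2*s*db*sn + 2*s*da*c + s^2*dth + s^2*dth*sn^2 + s^2*dth*c^2)) * pyth
  · intro hE
    refine ⟨sn * (-s * (-sn * dth) + db) - (-c) * (s * (c * dth) + da), ?_, ?_, ?_⟩
    · linear_combination (-c) * hE + (-b*da*c + a*db*c - s^2*dth*c) * pyth
    · linear_combination (-sn) * hE + (-b*da*sn + a*db*sn - s^2*dth*sn) * pyth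
    · ring
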